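/- arXiv:2308.13815 — 2 statements merged into one kernel-verified Lean document; each statement's English description precedes it below -/
import Mathlib

section
/- If MMD(H, p, q) = 0 for a universal RKHS H on a compact set Ω, then p = q. Conversely if p = q then MMD(H, p, q) = 0. -/
open MeasureTheory Filter

/-- For a universal RKHS `H` (modeled via a Hilbert space with a
continuous feature map `φ`, the RKHS functions being `x ↦ ⟪g, φ x⟫` for `g ∈ H`)
on a compact set `Ω ⊂ ℝ^d`, the MMD between two Borel probability measures
vanishes iff the measures coincide. -/
theorem mmd_eq_zero_iff {d : ℕ} (Ω : Set (EuclideanSpace ℝ (Fin d))) (hΩ : IsCompact Ω)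
    {H : Type*} [NormedAddCommGroup H] [InnerProductSpace ℝ H]
    (φ : Ω → H) (hφ : Continuous φ)
    (huniv : DenseRange (fun g : H =>
      (⟨fun x => (inner ℝ g (φ x) : ℝ), (continuous_const.inner hφ)⟩ : C(Ω, ℝ))))
    (p q : Measure Ω) [IsProbabilityMeasure p] [IsProbabilityMeasure q]
    (MMD : ℝ)
    (hMMD : MMD = sSup {r : ℝ | ∃ g : H, ‖g‖ ≤ 1 ∧
      r = (∫ x, (inner ℝ g (φ x) : ℝ) ∂p) - ∫ x, (inner ℝ g (φ x) : ℝ) ∂q}) :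
    MMD = 0 ↔ p = q := by
  have hcs : CompactSpace Ω := isCompact_iff_compactSpace.mp hΩ
  -- integrability of continuous functions
  have hint : ∀ (μ : Measure Ω) [IsProbabilityMeasure μ] (f : C(Ω, ℝ)),
      Integrable (fun x => f x) μ := by
    intro μ _ f
    exact f.continuous.integrable_of_hasCompactSupport (HasCompactSupport.of_compactSpace f)
  constructor
  · intro h0
    -- bound on ‖φ‖
    obtain ⟨C, hC⟩ : ∃ C : ℝ, ∀ x : Ω, ‖φ x‖ ≤ C := by
      obtain ⟨C, hC⟩ := (isCompact_range (hφ.norm)).bddAbove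
      exact ⟨C, fun x => hC ⟨x, rfl⟩⟩
    set S : Set ℝ := {r : ℝ | ∃ g : H, ‖g‖ ≤ 1 ∧
      r = (∫ x, (inner ℝ g (φ x) : ℝ) ∂p) - ∫ x, (inner ℝ g (φ x) : ℝ) ∂q} with hS
    have hbound : ∀ r ∈ S, r ≤ 2 * C := by
      rintro r ⟨g, hg, rfl⟩
      have hb : ∀ (μ : Measure Ω) [IsProbabilityMeasure μ],
          |∫ x, (inner ℝ g (φ x) : ℝ) ∂μ| ≤ C := by
        intro μ _
        rw [← Real.norm_eq_abs]
        calc ‖∫ x, (inner ℝ g (φ x) : ℝ) ∂μ‖ ≤ C * (μ Set.univ).toReal := by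
              apply norm_integral_le_of_norm_le_const
              filter_upwards with x
              calc ‖(inner ℝ g (φ x) : ℝ)‖ ≤ ‖g‖ * ‖φ x‖ := norm_inner_le_norm g (φ x)
                _ ≤ 1 * C := by
                    have h0 : (0:ℝ) ≤ ‖φ x‖ := norm_nonneg _
                    have h1 : ‖φ x‖ ≤ C := hC x
                    nlinarith [norm_nonneg g]
                _ = C := one_mul C
          _ = C := by simp
      have := abs_sub_abs_le_abs_sub (∫ x, (inner ℝ g (φ x) : ℝ) ∂p)
        (∫ x, (inner ℝ g (φ x) : ℝ) ∂q)
      have h1 := hb p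
      have h2 := hb q
      have := abs_sub (∫ x, (inner ℝ g (φ x) : ℝ) ∂p) (∫ x, (inner ℝ g (φ x) : ℝ) ∂q)
      calc (∫ x, (inner ℝ g (φ x) : ℝ) ∂p) - ∫ x, (inner ℝ g (φ x) : ℝ) ∂q
          ≤ |(∫ x, (inner ℝ g (φ x) : ℝ) ∂p) - ∫ x, (inner ℝ g (φ x) : ℝ) ∂q| := le_abs_self _
        _ ≤ |∫ x, (inner ℝ g (φ x) : ℝ) ∂p| + |∫ x, (inner ℝ g (φ x) : ℝ) ∂q| := abs_sub _ _
        _ ≤ C + C := add_le_add h1 h2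
        _ = 2 * C := by ring
    have hbdd : BddAbove S := ⟨2 * C, fun r hr => hbound r hr⟩
    -- every element of S is ≤ 0
    have hle : ∀ r ∈ S, r ≤ 0 := by
      intro r hr
      rw [hMMD] at h0
      calc r ≤ sSup S := le_csSup hbdd hr
        _ = 0 := h0
    -- equality of integrals for all g with ‖g‖ ≤ 1
    have heq1 : ∀ g : H, ‖g‖ ≤ 1 →
        (∫ x, (inner ℝ g (φ x) : ℝ) ∂p) = ∫ x, (inner ℝ g (φ x) : ℝ) ∂q := by
      intro g hg
      have h1 : ((∫ x, (inner ℝ g (φ x) : ℝ) ∂p) - ∫ x, (inner ℝ g (φ x) : ℝ) ∂q) ∈ S :=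
        ⟨g, hg, rfl⟩
      have h2 : ((∫ x, (inner ℝ (-g) (φ x) : ℝ) ∂p) - ∫ x, (inner ℝ (-g) (φ x) : ℝ) ∂q) ∈ S :=
        ⟨-g, by simpa using hg, rfl⟩
      have e1 := hle _ h1
      have e2 := hle _ h2
      simp only [inner_neg_left, integral_neg] at e2
      linarith
    -- equality of integrals for all g
    have heq : ∀ g : H,
        (∫ x, (inner ℝ g (φ x) : ℝ) ∂p) = ∫ x, (inner ℝ g (φ x) : ℝ) ∂q := by
      intro g
      rcases eq_or_ne g 0 with rfl | hg
      · simp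
      · have hn : (0:ℝ) < ‖g‖ := norm_pos_iff.mpr hg
        have := heq1 (‖g‖⁻¹ • g) (by
          rw [norm_smul, norm_inv, norm_norm]
          exact le_of_eq (inv_mul_cancel₀ hn.ne'))
        simp only [real_inner_smul_left, integral_const_mul] at this
        have := mul_left_cancel₀ (inv_ne_zero hn.ne') this
        exact this
    -- equality of integrals for all continuous f
    have heqC : ∀ f : C(Ω, ℝ), (∫ x, f x ∂p) = ∫ x, f x ∂q := by
      intro f
      have key : ∀ ε : ℝ, 0 < ε → |(∫ x, f x ∂p) - ∫ x, f x ∂q| ≤ 2 * ε := by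
        intro ε hε
        obtain ⟨g, hg⟩ := Metric.denseRange_iff.mp huniv f ε hε
        set fg : C(Ω, ℝ) := ⟨fun x => (inner ℝ g (φ x) : ℝ), (continuous_const.inner hφ)⟩
        have hdist : ∀ x : Ω, |f x - fg x| ≤ ε := by
          intro x
          have := ContinuousMap.dist_apply_le_dist (f := f) (g := fg) x
          have := this.trans hg.le
          rwa [Real.dist_eq] at this
        have hdiff : ∀ (μ : Measure Ω) [IsProbabilityMeasure μ],
            |(∫ x, f x ∂μ) - ∫ x, fg x ∂μ| ≤ ε := by
          intro μ _
          rw [← integral_sub (hint μ f) (hint μ fg), ← Real.norm_eq_abs]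
          calc ‖∫ x, (f x - fg x) ∂μ‖ ≤ ε * (μ Set.univ).toReal := by
                apply norm_integral_le_of_norm_le_const
                filter_upwards with x
                simpa [Real.norm_eq_abs] using hdist x
            _ = ε := by simp
        have hmid : (∫ x, fg x ∂p) = ∫ x, fg x ∂q := heq g
        have h1 := hdiff p
        have h2 := hdiff q
        calc |(∫ x, f x ∂p) - ∫ x, f x ∂q|
            = |((∫ x, f x ∂p) - ∫ x, fg x ∂p) + ((∫ x, fg x ∂q) - ∫ x, f x ∂q)| := by
              rw [hmid]; ring_nf
          _ ≤ |(∫ x, f x ∂p) - ∫ x, fg x ∂p| + |(∫ x, fg x ∂q) - ∫ x, f x ∂q| := abs_add_le _ _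
          _ ≤ ε + ε := add_le_add h1 (by rw [abs_sub_comm]; exact h2)
          _ = 2 * ε := by ring
      by_contra hne
      have habs : 0 < |(∫ x, f x ∂p) - ∫ x, f x ∂q| := abs_pos.mpr (sub_ne_zero.mpr hne)
      have := key (|(∫ x, f x ∂p) - ∫ x, f x ∂q| / 4) (by linarith)
      linarith
    -- conclude p = q
    apply ext_of_forall_lintegral_eq_of_IsFiniteMeasure
    intro f
    have hf : Continuous fun x => ((f x : ℝ)) := NNReal.continuous_coe.comp f.continuous
    have hfi : ∀ (μ : Measure Ω) [IsProbabilityMeasure μ],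
        Integrable (fun x => (f x : ℝ)) μ := fun μ _ => hint μ ⟨fun x => (f x : ℝ), hf⟩
    rw [lintegral_coe_eq_integral _ (hfi p), lintegral_coe_eq_integral _ (hfi q)]
    exact congrArg ENNReal.ofReal (heqC ⟨fun x => (f x : ℝ), hf⟩)
  · rintro rfl
    rw [hMMD]
    have : {r : ℝ | ∃ g : H, ‖g‖ ≤ 1 ∧
        r = (∫ x, (inner ℝ g (φ x) : ℝ) ∂p) - ∫ x, (inner ℝ g (φ x) : ℝ) ∂p} = {0} := by
      ext r
      simp only [Set.mem_setOf_eq, Set.mem_singleton_iff, sub_self]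
      constructor
      · rintro ⟨g, _, rfl⟩; rfl
      · rintro rfl; exact ⟨0, by simp, rfl⟩
    rw [this, csSup_singleton]
end

section
/- With OT_λ and OT defined as above and assuming minimizers T_λ* of OT_λ exist and a minimizer of OT exists and is finite, the symmetric MMD penalty of the minimizers satisfies limsup_{λ→∞} λ·[MMD((T_λ*)_♯p, q) + MMD(p, ((T_λ*)^{-1})_♯q)] ≤ OT(p,q) < ∞; in particular MMD((T_λ*)_♯ p, q) → 0 as λ → ∞. -/
open MeasureTheory Filter

/-- A diffeomorphism of a set `Ω`: a differentiable bijection of `Ω` with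
differentiable (measurable) inverse. -/
def IsDiffeoOn {d : ℕ} (Ω : Set (EuclideanSpace ℝ (Fin d)))
    (T S : EuclideanSpace ℝ (Fin d) → EuclideanSpace ℝ (Fin d)) : Prop :=
  Set.BijOn T Ω Ω ∧ Set.InvOn S T Ω Ω ∧ Set.MapsTo S Ω Ω ∧
    DifferentiableOn ℝ T Ω ∧ DifferentiableOn ℝ S Ω ∧ Measurable T ∧ Measurable S

/-- If `T lam` minimizes the relaxed objective `OT_lam` for each
`lam > 0`, and the constrained problem `OT` is attained (by `T₀`) with finite
value `OTval`, then `limsup_{lam→∞} lam·d_MMD(T lam) ≤ OTval`; in particular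
`MMD((T lam)_♯ p, q) → 0` as `lam → ∞`. -/
theorem penalty_limsup_le_OT {d : ℕ} (Ω : Set (EuclideanSpace ℝ (Fin d)))
    (hΩ : IsCompact Ω)
    (c : EuclideanSpace ℝ (Fin d) → EuclideanSpace ℝ (Fin d) → ℝ)
    (hcnonneg : ∀ x y, 0 ≤ c x y)
    (p q : Measure (EuclideanSpace ℝ (Fin d)))
    [IsProbabilityMeasure p] [IsProbabilityMeasure q]
    (hpΩ : p Ωᶜ = 0) (hqΩ : q Ωᶜ = 0)
    (MMD : Measure (EuclideanSpace ℝ (Fin d)) → Measure (EuclideanSpace ℝ (Fin d)) → ℝ)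
    (hMMDnonneg : ∀ μ ν, 0 ≤ MMD μ ν)
    (hMMDrefl : ∀ μ ν, μ = ν → MMD μ ν = 0)
    (T S : ℝ → EuclideanSpace ℝ (Fin d) → EuclideanSpace ℝ (Fin d))
    (hTdiffeo : ∀ lam > (0:ℝ), IsDiffeoOn Ω (T lam) (S lam))
    (hTmin : ∀ lam > (0:ℝ), ∀ T' S', IsDiffeoOn Ω T' S' →
      (∫ x, c x (T lam x) ∂p) + (∫ z, c (S lam z) z ∂q)
          + lam * (MMD (p.map (T lam)) q + MMD p (q.map (S lam))) ≤
        (∫ x, c x (T' x) ∂p) + (∫ z, c (S' z) z ∂q)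
          + lam * (MMD (p.map T') q + MMD p (q.map S')))
    (T₀ S₀ : EuclideanSpace ℝ (Fin d) → EuclideanSpace ℝ (Fin d))
    (hT₀ : IsDiffeoOn Ω T₀ S₀) (hT₀push : p.map T₀ = q)
    (OTval : ℝ)
    (hOTval : OTval = (∫ x, c x (T₀ x) ∂p) + (∫ z, c (S₀ z) z ∂q))
    (hOTmin : ∀ T' S', IsDiffeoOn Ω T' S' → p.map T' = q →
      OTval ≤ (∫ x, c x (T' x) ∂p) + (∫ z, c (S' z) z ∂q)) :
    limsup (fun lam : ℝ =>
        lam * (MMD (p.map (T lam)) q + MMD p (q.map (S lam)))) atTop ≤ OTval ∧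
      Tendsto (fun lam : ℝ => MMD (p.map (T lam)) q) atTop (nhds 0) := by

  -- `q.map S₀ = p` since `S₀ ∘ T₀ = id` a.e. `p`.
  have hS₀push : q.map S₀ = p := by
    rw [← hT₀push, Measure.map_map hT₀.2.2.2.2.2.2 hT₀.2.2.2.2.2.1]
    have hae : (S₀ ∘ T₀) =ᵐ[p] id := by
      have hmem : ∀ᵐ x ∂p, x ∈ Ω := ae_iff.mpr (by exact hpΩ)
      filter_upwards [hmem] with x hx
      exact hT₀.2.1.1 hx
    rw [Measure.map_congr hae, Measure.map_id]
  have key : ∀ lam > (0:ℝ),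
      lam * (MMD (p.map (T lam)) q + MMD p (q.map (S lam))) ≤ OTval := by
    intro lam hlam
    have h := hTmin lam hlam T₀ S₀ hT₀
    rw [hMMDrefl _ _ hT₀push, hMMDrefl _ _ hS₀push.symm] at h
    simp only [add_zero, mul_zero] at h
    have h1 : (0:ℝ) ≤ ∫ x, c x (T lam x) ∂p := integral_nonneg fun x => hcnonneg _ _
    have h2 : (0:ℝ) ≤ ∫ z, c (S lam z) z ∂q := integral_nonneg fun z => hcnonneg _ _
    nlinarith [h]
  have hnn : ∀ lam > (0:ℝ),
      (0:ℝ) ≤ lam * (MMD (p.map (T lam)) q + MMD p (q.map (S lam))) := by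
    intro lam hlam
    exact mul_nonneg hlam.le (add_nonneg (hMMDnonneg _ _) (hMMDnonneg _ _))
  constructor
  · apply Filter.limsup_le_of_le
    · exact Filter.isCoboundedUnder_le_of_eventually_le atTop
        (x := 0) (by filter_upwards [eventually_gt_atTop (0:ℝ)] with lam hlam using hnn lam hlam)
    · filter_upwards [eventually_gt_atTop (0:ℝ)] with lam hlam using key lam hlam
  · have hlim : Tendsto (fun lam : ℝ => OTval / lam) atTop (nhds 0) :=
      Tendsto.div_atTop tendsto_const_nhds tendsto_id
    apply tendsto_of_tendsto_of_tendsto_of_le_of_le' tendsto_const_nhds hlim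
    · filter_upwards [eventually_gt_atTop (0:ℝ)] with lam hlam using hMMDnonneg _ _
    · filter_upwards [eventually_gt_atTop (0:ℝ)] with lam hlam
      rw [le_div_iff₀ hlam]
      calc MMD (p.map (T lam)) q * lam
          ≤ (MMD (p.map (T lam)) q + MMD p (q.map (S lam))) * lam := by
            have := hMMDnonneg p (q.map (S lam)); nlinarith
        _ = lam * (MMD (p.map (T lam)) q + MMD p (q.map (S lam))) := mul_comm _ _
        _ ≤ OTval := key lam hlam
end
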